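/- Let α ∈ ℝ, p, q positive integers, γ ≥ 2, and suppose |qα − p| < 1/(16 q^γ). Let x ∈ 𝕋 be at distance less than 1/(16q) from the set {0, 1/q, …, (q−1)/q}, and let n ∈ ℤ with |n| ≤ q^{γ−1}. Then cos(2π q (x + nα)) > √2/2. -/

import Mathlib

open Real

/-- If `|qα - p| < 1/(16 q^γ)`, `x` is within `1/(16q)` of a multiple of `1/q`, and
`|n| ≤ q^{γ-1}`, then `cos(2πq(x + nα)) > √2/2`. -/
theorem cos_large_near_resonance (α : ℝ) (p : ℤ) (q : ℕ) (hq : 1 ≤ q)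
    (γ : ℝ) (hγ : 2 ≤ γ)
    (happrox : |(q : ℝ) * α - (p : ℝ)| < 1 / (16 * (q : ℝ) ^ γ))
    (x : ℝ) (hx : ∃ j : ℤ, |x - (j : ℝ) / (q : ℝ)| < 1 / (16 * (q : ℝ)))
    (n : ℤ) (hn : |(n : ℝ)| ≤ (q : ℝ) ^ (γ - 1)) :
    Real.cos (2 * Real.pi * (q : ℝ) * (x + (n : ℝ) * α)) > Real.sqrt 2 / 2 := by
  obtain ⟨j, hj⟩ := hx
  have hq0 : (0 : ℝ) < q := by exact_mod_cast hq
  set ε : ℝ := (q : ℝ) * x - j + n * ((q : ℝ) * α - p) with hε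
  have hkey : 2 * Real.pi * (q : ℝ) * (x + (n : ℝ) * α)
      = 2 * Real.pi * ε + (j + n * p : ℤ) * (2 * Real.pi) := by
    push_cast
    ring
  rw [hkey, Real.cos_add_int_mul_two_pi]
  -- bound |q x - j|
  have h1 : |(q : ℝ) * x - j| < 1 / 16 := by
    have : |(q : ℝ) * x - j| = (q : ℝ) * |x - j / q| := by
      rw [← abs_of_pos hq0, ← abs_mul]
      congr 1
      field_simp
      rw [abs_of_pos hq0]; ring
    rw [this]
    calc (q : ℝ) * |x - j / q| < (q : ℝ) * (1 / (16 * q)) :=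
          mul_lt_mul_of_pos_left hj hq0
      _ = 1 / 16 := by field_simp
  -- bound |n (qα - p)|
  have hrq : (0 : ℝ) < (q : ℝ) ^ γ := Real.rpow_pos_of_pos hq0 γ
  have hrq1 : (0 : ℝ) < (q : ℝ) ^ (γ - 1) := Real.rpow_pos_of_pos hq0 (γ - 1)
  have h2 : |(n : ℝ) * ((q : ℝ) * α - p)| < 1 / 16 := by
    rw [abs_mul]
    calc |(n : ℝ)| * |(q : ℝ) * α - p|
        ≤ (q : ℝ) ^ (γ - 1) * |(q : ℝ) * α - p| :=
          mul_le_mul_of_nonneg_right hn (abs_nonneg _)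
      _ < (q : ℝ) ^ (γ - 1) * (1 / (16 * (q : ℝ) ^ γ)) :=
          mul_lt_mul_of_pos_left happrox hrq1
      _ = 1 / (16 * q) := by
          rw [Real.rpow_sub hq0, Real.rpow_one]
          field_simp
      _ ≤ 1 / 16 := by
          apply div_le_div_of_nonneg_left (by norm_num) (by norm_num)
          have hq1 : (1:ℝ) ≤ q := by exact_mod_cast hq
          linarith
  have hεb : |ε| < 1 / 8 := by
    calc |ε| ≤ |(q : ℝ) * x - j| + |(n : ℝ) * ((q : ℝ) * α - p)| := abs_add_le _ _
      _ < 1 / 16 + 1 / 16 := by linarith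
      _ = 1 / 8 := by norm_num
  -- now cos(2πε) > √2/2
  have habs : |2 * Real.pi * ε| < Real.pi / 4 := by
    rw [abs_mul, abs_of_pos (by positivity : (0:ℝ) < 2 * Real.pi)]
    nlinarith [Real.pi_pos]
  rw [← Real.cos_abs, ← Real.cos_pi_div_four]
  apply Real.cos_lt_cos_of_nonneg_of_le_pi (abs_nonneg _)
  · linarith [Real.pi_pos]
  · exact habs
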